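/- For any constants C_1 > 0 and C_2, the function u(\tau) = -\frac{C_1 C_2}{4} \tau^{\sqrt{C_1}-1}/(1 - C_2 \tau^{\sqrt{C_1}})^2 satisfies u'' = (u')^2/u - u'/\tau - 8u^2/\tau wherever it is defined and nonzero (\tau>0, 1-C_2\tau^{\sqrt{C_1}} \ne 0, u \ne 0). -/

import Mathlib

noncomputable def Faux (s C₂ : ℝ) (t : ℝ) : ℝ :=
  -(s ^ 2 * C₂ / 4) * t ^ s / (t * (1 - C₂ * t ^ s) ^ 2)

noncomputable def Gaux (s C₂ : ℝ) (t : ℝ) : ℝ :=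
  -(s ^ 2 * C₂ / 4) * t ^ s * ((s - 1) + (s + 1) * C₂ * t ^ s) /
    (t ^ 2 * (1 - C₂ * t ^ s) ^ 3)

noncomputable def Haux (s C₂ : ℝ) (t : ℝ) : ℝ :=
  -(s ^ 2 * C₂ / 4) * t ^ s *
      (s * (1 - C₂ * t ^ s) * ((s - 1) + 2 * (s + 1) * C₂ * t ^ s) -
        ((s - 1) + (s + 1) * C₂ * t ^ s) * (2 * (1 - C₂ * t ^ s) - 3 * C₂ * s * t ^ s)) /
    (t ^ 3 * (1 - C₂ * t ^ s) ^ 4)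

lemma hasDerivAt_Faux (s C₂ τ : ℝ) (hτ : 0 < τ) (hD : 1 - C₂ * τ ^ s ≠ 0) :
    HasDerivAt (Faux s C₂) (Gaux s C₂ τ) τ := by
  have hτ' : τ ≠ 0 := hτ.ne'
  have hP : HasDerivAt (fun t : ℝ => t ^ s) (s * τ ^ (s - 1)) τ :=
    Real.hasDerivAt_rpow_const (Or.inl hτ')
  have hN : HasDerivAt (fun t : ℝ => -(s ^ 2 * C₂ / 4) * t ^ s)
      (-(s ^ 2 * C₂ / 4) * (s * τ ^ (s - 1))) τ := hP.const_mul _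
  have hDf : HasDerivAt (fun t : ℝ => 1 - C₂ * t ^ s) (-(C₂ * (s * τ ^ (s - 1)))) τ :=
    (hP.const_mul C₂).const_sub 1
  have hQ : HasDerivAt (fun t : ℝ => t * (1 - C₂ * t ^ s) ^ 2)
      (1 * (1 - C₂ * τ ^ s) ^ 2 +
        τ * ((2 : ℕ) * (1 - C₂ * τ ^ s) ^ (2 - 1) * (-(C₂ * (s * τ ^ (s - 1)))))) τ :=
    (hasDerivAt_id τ).mul (hDf.pow 2)
  have hQ0 : τ * (1 - C₂ * τ ^ s) ^ 2 ≠ 0 := mul_ne_zero hτ' (pow_ne_zero 2 hD)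
  have h := hN.div hQ hQ0
  refine h.congr_deriv ?_
  have hps : τ ^ (s - 1) = τ ^ s / τ := by rw [Real.rpow_sub hτ, Real.rpow_one]
  have hPne : τ ^ s ≠ 0 := (Real.rpow_pos_of_pos hτ s).ne'
  rw [hps]
  unfold Gaux
  push_cast
  field_simp
  ring

lemma hasDerivAt_Gaux (s C₂ τ : ℝ) (hτ : 0 < τ) (hD : 1 - C₂ * τ ^ s ≠ 0) :
    HasDerivAt (Gaux s C₂) (Haux s C₂ τ) τ := by
  have hτ' : τ ≠ 0 := hτ.ne'
  have hP : HasDerivAt (fun t : ℝ => t ^ s) (s * τ ^ (s - 1)) τ :=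
    Real.hasDerivAt_rpow_const (Or.inl hτ')
  have hDf : HasDerivAt (fun t : ℝ => 1 - C₂ * t ^ s) (-(C₂ * (s * τ ^ (s - 1)))) τ :=
    (hP.const_mul C₂).const_sub 1
  have hN : HasDerivAt
      (fun t : ℝ => -(s ^ 2 * C₂ / 4) * t ^ s * ((s - 1) + (s + 1) * C₂ * t ^ s))
      (-(s ^ 2 * C₂ / 4) * (s * τ ^ (s - 1)) * ((s - 1) + (s + 1) * C₂ * τ ^ s) +
        -(s ^ 2 * C₂ / 4) * τ ^ s * ((s + 1) * C₂ * (s * τ ^ (s - 1)))) τ :=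
    (hP.const_mul _).mul ((hP.const_mul ((s + 1) * C₂)).const_add (s - 1))
  have hQ : HasDerivAt (fun t : ℝ => t ^ 2 * (1 - C₂ * t ^ s) ^ 3)
      ((2 : ℕ) * τ ^ (2 - 1) * (1 - C₂ * τ ^ s) ^ 3 +
        τ ^ 2 * ((3 : ℕ) * (1 - C₂ * τ ^ s) ^ (3 - 1) * (-(C₂ * (s * τ ^ (s - 1)))))) τ :=
    (hasDerivAt_pow 2 τ).mul (hDf.pow 3)
  have hQ0 : τ ^ 2 * (1 - C₂ * τ ^ s) ^ 3 ≠ 0 :=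
    mul_ne_zero (pow_ne_zero 2 hτ') (pow_ne_zero 3 hD)
  have h := hN.div hQ hQ0
  refine h.congr_deriv ?_
  have hps : τ ^ (s - 1) = τ ^ s / τ := by rw [Real.rpow_sub hτ, Real.rpow_one]
  have hPne : τ ^ s ≠ 0 := (Real.rpow_pos_of_pos hτ s).ne'
  rw [hps]
  unfold Haux
  push_cast
  field_simp
  ring

/-- For constants `C₁ > 0` and `C₂`, the function
`u(τ) = -(C₁C₂/4) τ^(√C₁ - 1)/(1 - C₂ τ^(√C₁))²` satisfies
`u'' = (u')²/u - u'/τ - 8u²/τ` wherever it is defined and nonzero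
(`τ > 0`, `1 - C₂ τ^(√C₁) ≠ 0`, `u(τ) ≠ 0`). -/
theorem stmt_9 (C₁ C₂ : ℝ) (hC₁ : 0 < C₁) (u : ℝ → ℝ)
    (hu : ∀ τ : ℝ, 0 < τ →
      u τ = -(C₁ * C₂ / 4) * τ ^ (Real.sqrt C₁ - 1) / (1 - C₂ * τ ^ Real.sqrt C₁) ^ 2) :
    ∀ τ : ℝ, 0 < τ → 1 - C₂ * τ ^ Real.sqrt C₁ ≠ 0 → u τ ≠ 0 →
      deriv (deriv u) τ =
        (deriv u τ) ^ 2 / u τ - deriv u τ / τ - 8 * (u τ) ^ 2 / τ := by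
  set s := Real.sqrt C₁ with hs
  have hs2 : s ^ 2 = C₁ := Real.sq_sqrt hC₁.le
  -- u agrees with Faux on positive reals
  have huF : ∀ t : ℝ, 0 < t → u t = Faux s C₂ t := by
    intro t ht
    rw [hu t ht, Faux, hs2, Real.rpow_sub ht, Real.rpow_one]
    field_simp
  -- the set where things are nice is open
  set U : Set ℝ := Set.Ioi 0 ∩ (fun t : ℝ => 1 - C₂ * t ^ s) ⁻¹' {0}ᶜ with hU
  have hUopen : IsOpen U := by
    apply ContinuousOn.isOpen_inter_preimage ?_ isOpen_Ioi isOpen_compl_singleton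
    intro t ht
    have h1 : ContinuousAt (fun t : ℝ => t ^ s) t :=
      Real.continuousAt_rpow_const t s (Or.inl (ne_of_gt ht))
    exact (continuousAt_const.sub (continuousAt_const.mul h1)).continuousWithinAt
  have hUmem : ∀ t ∈ U, 0 < t ∧ 1 - C₂ * t ^ s ≠ 0 := by
    intro t ht
    exact ⟨ht.1, ht.2⟩
  -- deriv u = Gaux on U
  have hderiv : ∀ t ∈ U, deriv u t = Gaux s C₂ t := by
    intro t ht
    obtain ⟨ht0, htD⟩ := hUmem t ht
    have heq : u =ᶠ[nhds t] Faux s C₂ :=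
      Filter.eventuallyEq_of_mem (Ioi_mem_nhds ht0) fun x hx => huF x hx
    rw [heq.deriv_eq]
    exact (hasDerivAt_Faux s C₂ t ht0 htD).deriv
  intro τ hτ hD hu0
  have hτU : τ ∈ U := ⟨hτ, hD⟩
  have heq2 : deriv u =ᶠ[nhds τ] Gaux s C₂ :=
    Filter.eventuallyEq_of_mem (hUopen.mem_nhds hτU) hderiv
  have hdd : deriv (deriv u) τ = Haux s C₂ τ := by
    rw [heq2.deriv_eq]
    exact (hasDerivAt_Gaux s C₂ τ hτ hD).deriv
  have hd1 : deriv u τ = Gaux s C₂ τ := hderiv τ hτU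
  have huτ : u τ = Faux s C₂ τ := huF τ hτ
  rw [hdd, hd1, huτ]
  have hFne : Faux s C₂ τ ≠ 0 := huτ ▸ hu0
  have hPne : τ ^ s ≠ 0 := (Real.rpow_pos_of_pos hτ s).ne'
  have hτ' : τ ≠ 0 := hτ.ne'
  have hs0 : s ≠ 0 := (Real.sqrt_pos.mpr hC₁).ne'
  have hC2 : C₂ ≠ 0 := by
    intro hc
    apply hFne
    rw [Faux, hc]
    ring
  unfold Faux Gaux Haux
  set P := τ ^ s with hPdef
  set_option maxHeartbeats 2000000 in
  field_simp [hτ', hD, hPne, hs0, hC2]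
  set_option maxHeartbeats 2000000 in
  ring
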